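/- For n ≥ 1, the Narayana polynomial N_n(x) = \sum_{k=1}^{n} (1/n) binom(n,k) binom(n,k-1) x^k has only non-positive real zeros. -/

import Mathlib

open Polynomial Finset

noncomputable def hpol {R : Type*} [CommRing R] (p : R[X]) (d : ℕ) : R[X] :=
  ∑ m ∈ range (d+1), C (p.coeff m) * (1+X)^m * (1-X)^(d-m)

lemma hpol_map (p : ℝ[X]) (d : ℕ) :
    (hpol p d).map (algebraMap ℝ ℂ) = hpol (p.map (algebraMap ℝ ℂ)) d := by
  simp [hpol, Polynomial.map_sum, Polynomial.map_mul, Polynomial.map_pow,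
    Polynomial.map_add, Polynomial.map_sub, coeff_map]

lemma hpol_eval {K : Type*} [Field K] (p : K[X]) (d : ℕ) (hd : p.natDegree < d + 1)
    (z : K) (hz : z ≠ 1) :
    (hpol p d).eval z = (1-z)^d * p.eval ((1+z)/(1-z)) := by
  have h1 : (1:K) - z ≠ 0 := sub_ne_zero.mpr (Ne.symm hz)
  rw [hpol, eval_finset_sum, eval_eq_sum_range' hd, Finset.mul_sum]
  refine Finset.sum_congr rfl fun m hm => ?_
  have hm' : m ≤ d := by simpa [Nat.lt_succ_iff] using hm
  simp only [eval_mul, eval_pow, eval_C, eval_add, eval_sub, eval_one, eval_X]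
  rw [div_pow]
  rw [show (1-z)^d = (1-z)^(d-m) * (1-z)^m by rw [← pow_add, Nat.sub_add_cancel hm']]
  field_simp

lemma hpol_g0 (n : ℕ) : hpol (((X:ℝ[X])^2 - 1)^n) (2*n) = C ((4:ℝ)^n) * X^n := by
  have hdeg : (((X:ℝ[X])^2 - 1)^n).natDegree < 2*n + 1 := by
    have : (((X:ℝ[X])^2 - 1)).natDegree = 2 := by
      rw [show ((1:ℝ[X]) = C 1) from (C_1).symm, natDegree_X_pow_sub_C]
    calc (((X:ℝ[X])^2 - 1)^n).natDegree = n * 2 := by rw [natDegree_pow, this]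
    _ < 2*n+1 := by omega
  apply eq_of_infinite_eval_eq
  apply Set.Infinite.mono (s := {(1:ℝ)}ᶜ) ?_ ?_
  · intro x hx
    have hx1 : x ≠ 1 := hx
    have h1 : (1:ℝ) - x ≠ 0 := sub_ne_zero.mpr (Ne.symm hx1)
    show eval x _ = eval x _
    rw [hpol_eval _ _ hdeg x hx1]
    simp only [eval_pow, eval_sub, eval_one, eval_X, eval_mul, eval_C]
    rw [pow_mul, ← mul_pow, ← mul_pow]
    congr 1
    field_simp
    ring
  · exact (Set.finite_singleton 1).infinite_compl

lemma termd0 (c : ℝ) (d : ℕ) :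
    (1-(X:ℝ[X])) * derivative (C c * (1+X)^0 * (1-X)^(d+1))
      + C ((d:ℝ)+1) * (C c * (1+X)^0 * (1-X)^(d+1)) = 0 := by
  simp only [pow_zero, mul_one, derivative_mul, derivative_C, derivative_pow,
    derivative_sub, derivative_one, derivative_X, Nat.add_sub_cancel,
    map_natCast, map_add, map_one, zero_mul, zero_add]
  push_cast
  ring

lemma termd (c : ℝ) (a b : ℕ) :
    (1-(X:ℝ[X])) * derivative (C c * (1+X)^(a+1) * (1-X)^b)
      + C ((a:ℝ)+1+b) * (C c * (1+X)^(a+1) * (1-X)^b)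
      = 2 * (C (c*((a:ℝ)+1)) * (1+X)^a * (1-X)^b) := by
  rcases b with _ | b
  · simp only [pow_zero, mul_one, derivative_mul, derivative_C, derivative_pow,
      derivative_add, derivative_one, derivative_X, Nat.add_sub_cancel,
      map_natCast, map_add, map_mul, map_one, Nat.cast_zero, zero_mul, add_zero]
    push_cast
    ring
  · simp only [derivative_mul, derivative_C, derivative_pow, derivative_add,
      derivative_sub, derivative_one, derivative_X, Nat.add_sub_cancel,
      map_natCast, map_add, map_mul, map_one, zero_mul, zero_add]
    push_cast
    ring

lemma hpol_deriv (p : ℝ[X]) (d : ℕ) :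
    (1-(X:ℝ[X])) * (hpol p (d+1)).derivative + C ((d:ℝ)+1) * hpol p (d+1)
      = 2 * hpol (derivative p) d := by
  have expand : (1-(X:ℝ[X])) * (hpol p (d+1)).derivative + C ((d:ℝ)+1) * hpol p (d+1)
      = ∑ m ∈ range (d+2),
          ((1-(X:ℝ[X])) * derivative (C (p.coeff m) * (1+X)^m * (1-X)^(d+1-m))
            + C ((d:ℝ)+1) * (C (p.coeff m) * (1+X)^m * (1-X)^(d+1-m))) := by
    rw [hpol, derivative_sum, Finset.mul_sum, Finset.mul_sum, ← Finset.sum_add_distrib]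
  rw [expand, Finset.sum_range_succ']
  have h0 : (1-(X:ℝ[X])) * derivative (C (p.coeff 0) * (1+X)^0 * (1-X)^(d+1-0))
            + C ((d:ℝ)+1) * (C (p.coeff 0) * (1+X)^0 * (1-X)^(d+1-0)) = 0 := by
    simpa using termd0 (p.coeff 0) d
  rw [h0, add_zero, hpol, Finset.mul_sum]
  refine Finset.sum_congr rfl fun m hm => ?_
  have hm' : m ≤ d := by simpa [Nat.lt_succ_iff] using hm
  have he : d + 1 - (m + 1) = d - m := by omega
  have hs : ((d:ℝ)+1) = (m:ℝ)+1+((d-m:ℕ):ℝ) := by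
    rw [Nat.cast_sub hm']; ring
  rw [he, hs, termd, coeff_derivative]

noncomputable def Qd (n i : ℕ) : ℝ[X] :=
  ∑ j ∈ range (i+1),
    C ((Nat.factorial i * n.choose (n-i+j) * n.choose j : ℕ) : ℝ) * X^(n-i+j)

lemma chooseid (n a b : ℕ) (h : a + 1 ≤ n) (hb : b ≤ a + 1) :
    n.choose (n-a+b) * (n-a+b) = n.choose (n-(a+1)+b) * (a+1-b) := by
  have h1 := Nat.choose_succ_right_eq n (n-(a+1)+b)
  rw [show n-(a+1)+b+1 = n-a+b by omega, show n - (n-(a+1)+b) = a+1-b by omega] at h1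
  exact h1

lemma Qstep (n i : ℕ) (hi : i + 1 ≤ n) :
    (1-(X:ℝ[X])) * (Qd n i).derivative + C (2*(n:ℝ)-(i:ℝ)) * Qd n i = Qd n (i+1) := by
  have key : ∀ j ∈ range (i+1),
      (1-(X:ℝ[X])) * derivative (C ((Nat.factorial i * n.choose (n-i+j) * n.choose j : ℕ) : ℝ) * X^(n-i+j))
        + C (2*(n:ℝ)-(i:ℝ)) * (C ((Nat.factorial i * n.choose (n-i+j) * n.choose j : ℕ) : ℝ) * X^(n-i+j))
      = C ((Nat.factorial i * n.choose (n-i+j) * n.choose j * (n-i+j) : ℕ) : ℝ) * X^(n-(i+1)+j)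
        + C ((Nat.factorial i * n.choose (n-i+j) * n.choose j * (n-j) : ℕ) : ℝ) * X^(n-i+j) := by
    intro j hj
    have hj' : j ≤ i := by simpa [Nat.lt_succ_iff] using hj
    rw [derivative_C_mul_X_pow]
    have e1 : n-i+j-1 = n-(i+1)+j := by omega
    have hx : X^(n-i+j) = (X:ℝ[X]) * X^(n-(i+1)+j) := by
      rw [← pow_succ', show n-(i+1)+j+1 = n-i+j by omega]
    rw [e1, hx]
    simp only [map_natCast, map_sub, map_mul, map_ofNat, Nat.cast_mul]
    push_cast [Nat.cast_sub (show i ≤ n by omega), Nat.cast_sub (show j ≤ n by omega),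
      Nat.cast_sub (show i+1 ≤ n by omega)]
    ring
  rw [show (1-(X:ℝ[X])) * (Qd n i).derivative + C (2*(n:ℝ)-(i:ℝ)) * Qd n i
      = ∑ j ∈ range (i+1),
        ((1-(X:ℝ[X])) * derivative (C ((Nat.factorial i * n.choose (n-i+j) * n.choose j : ℕ) : ℝ) * X^(n-i+j))
        + C (2*(n:ℝ)-(i:ℝ)) * (C ((Nat.factorial i * n.choose (n-i+j) * n.choose j : ℕ) : ℝ) * X^(n-i+j)))
    from by rw [Qd, derivative_sum, Finset.mul_sum, Finset.mul_sum, ← Finset.sum_add_distrib]]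
  rw [Finset.sum_congr rfl key, Finset.sum_add_distrib]
  have hS1 : (∑ j ∈ range (i+1),
        C ((Nat.factorial i * n.choose (n-i+j) * n.choose j * (n-i+j) : ℕ) : ℝ) * X^(n-(i+1)+j))
      = ∑ j ∈ range (i+2),
        C ((Nat.factorial i * n.choose (n-(i+1)+j) * n.choose j * (i+1-j) : ℕ) : ℝ) * X^(n-(i+1)+j) := by
    conv_rhs => rw [Finset.sum_range_succ]
    have hz : (Nat.factorial i * n.choose (n-(i+1)+(i+1)) * n.choose (i+1) * (i+1-(i+1)) : ℕ) = 0 := by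
      simp
    rw [hz]
    simp only [Nat.cast_zero, map_zero, zero_mul, add_zero]
    refine Finset.sum_congr rfl fun j hj => ?_
    have hj' : j ≤ i := by simpa [Nat.lt_succ_iff] using hj
    have hnat : Nat.factorial i * n.choose (n-i+j) * n.choose j * (n-i+j)
        = Nat.factorial i * n.choose (n-(i+1)+j) * n.choose j * (i+1-j) := by
      have core := chooseid n i j hi (by omega)
      calc Nat.factorial i * n.choose (n-i+j) * n.choose j * (n-i+j)
          = (n.choose (n-i+j) * (n-i+j)) * (Nat.factorial i * n.choose j) := by ring
        _ = (n.choose (n-(i+1)+j) * (i+1-j)) * (Nat.factorial i * n.choose j) := by rw [core]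
        _ = Nat.factorial i * n.choose (n-(i+1)+j) * n.choose j * (i+1-j) := by ring
    rw [hnat]
  have hS2 : (∑ j ∈ range (i+1),
        C ((Nat.factorial i * n.choose (n-i+j) * n.choose j * (n-j) : ℕ) : ℝ) * X^(n-i+j))
      = ∑ j ∈ range (i+2),
        C ((Nat.factorial i * n.choose (n-(i+1)+j) * n.choose j * j : ℕ) : ℝ) * X^(n-(i+1)+j) := by
    conv_rhs => rw [Finset.sum_range_succ']
    have hz : (Nat.factorial i * n.choose (n-(i+1)+0) * n.choose 0 * 0 : ℕ) = 0 := by simp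
    rw [hz]
    simp only [Nat.cast_zero, map_zero, zero_mul, add_zero]
    refine Finset.sum_congr rfl fun j hj => ?_
    have hj' : j ≤ i := by simpa [Nat.lt_succ_iff] using hj
    have he : n-(i+1)+(j+1) = n-i+j := by omega
    rw [he]
    have hnat : Nat.factorial i * n.choose (n-i+j) * n.choose j * (n-j)
        = Nat.factorial i * n.choose (n-(i+1)+(j+1)) * n.choose (j+1) * (j+1) := by
      rw [he]
      have core := Nat.choose_succ_right_eq n j
      calc Nat.factorial i * n.choose (n-i+j) * n.choose j * (n-j)
          = (n.choose j * (n-j)) * (Nat.factorial i * n.choose (n-i+j)) := by ring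
        _ = (n.choose (j+1) * (j+1)) * (Nat.factorial i * n.choose (n-i+j)) := by rw [← core]
        _ = Nat.factorial i * n.choose (n-i+j) * n.choose (j+1) * (j+1) := by ring
    rw [hnat, he]
  rw [hS1, hS2, ← Finset.sum_add_distrib, Qd]
  refine Finset.sum_congr rfl fun j hj => ?_
  have hj' : j ≤ i + 1 := by simpa [Nat.lt_succ_iff] using hj
  rw [← add_mul, ← C_add, ← Nat.cast_add]
  have hnat : Nat.factorial i * n.choose (n-(i+1)+j) * n.choose j * (i+1-j)
        + Nat.factorial i * n.choose (n-(i+1)+j) * n.choose j * j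
      = Nat.factorial (i+1) * n.choose (n-(i+1)+j) * n.choose j := by
    calc Nat.factorial i * n.choose (n-(i+1)+j) * n.choose j * (i+1-j)
          + Nat.factorial i * n.choose (n-(i+1)+j) * n.choose j * j
        = Nat.factorial i * n.choose (n-(i+1)+j) * n.choose j * ((i+1-j) + j) := by ring
      _ = Nat.factorial (i+1) * n.choose (n-(i+1)+j) * n.choose j := by
          rw [show i+1-j+j = i+1 by omega, Nat.factorial_succ]; ring
  rw [hnat]

noncomputable def gp (n i : ℕ) : ℝ[X] := derivative^[i] (((X:ℝ[X])^2 - 1)^n)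

lemma gp_zero (n : ℕ) : gp n 0 = ((X:ℝ[X])^2 - 1)^n := rfl

lemma gp_succ (n i : ℕ) : gp n (i+1) = derivative (gp n i) := by
  rw [gp, gp, Function.iterate_succ_apply']

lemma natDegree_base (n : ℕ) : (((X:ℝ[X])^2 - 1)^n).natDegree = 2*n := by
  have h2 : (((X:ℝ[X])^2 - 1)).natDegree = 2 := by
    rw [show ((1:ℝ[X]) = C 1) from (C_1).symm, natDegree_X_pow_sub_C]
  rw [natDegree_pow, h2]; ring

lemma roots_base (n : ℕ) : Multiset.card (((X:ℝ[X])^2 - 1)^n).roots = 2*n := by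
  have hfact : ((X:ℝ[X])^2 - 1) = (X - C 1) * (X - C (-1)) := by
    simp only [map_neg, map_one]; ring
  have hne : ((X:ℝ[X]) - C 1) * (X - C (-1)) ≠ 0 :=
    mul_ne_zero (X_sub_C_ne_zero 1) (X_sub_C_ne_zero (-1))
  rw [roots_pow, Multiset.card_nsmul, hfact, roots_mul hne, roots_X_sub_C, roots_X_sub_C]
  simp; ring

lemma gp_spec (n : ℕ) : ∀ i, i ≤ 2*n →
    (gp n i).natDegree = 2*n - i ∧ Multiset.card (gp n i).roots = 2*n - i := by
  intro i
  induction i with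
  | zero =>
    intro _
    constructor
    · rw [gp_zero, natDegree_base]; omega
    · rw [gp_zero, roots_base]; omega
  | succ i ih =>
    intro hi
    obtain ⟨hdeg, hroots⟩ := ih (by omega)
    have hpos : 0 < (gp n i).natDegree := by omega
    have hdd : (gp n (i+1)).degree = ((gp n i).natDegree - 1 : ℕ) := by
      rw [gp_succ]; exact degree_derivative_eq _ hpos
    have hdeg' : (gp n (i+1)).natDegree = 2*n - (i+1) := by
      rw [natDegree_eq_of_degree_eq_some hdd, hdeg]; omega
    refine ⟨hdeg', ?_⟩
    have hub : Multiset.card (gp n (i+1)).roots ≤ 2*n - (i+1) := by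
      simpa [hdeg'] using card_roots' (gp n (i+1))
    have hlb := card_roots_le_derivative (gp n i)
    rw [← gp_succ] at hlb
    omega

lemma real_of_complexRoot (p : ℝ[X]) (hc : Multiset.card p.roots = p.natDegree)
    (hp : p ≠ 0) (z : ℂ) (hz : aeval z p = 0) : ∃ r : ℝ, z = (r : ℂ) := by
  have h := C_leadingCoeff_mul_prod_multiset_X_sub_C hc
  have h2 : aeval z (C p.leadingCoeff * (p.roots.map fun a => X - C a).prod) = 0 := by
    rw [h]; exact hz
  rw [map_mul, aeval_C] at h2
  have hlc : (algebraMap ℝ ℂ) p.leadingCoeff ≠ 0 := by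
    simpa using leadingCoeff_ne_zero.mpr hp
  have h3 : aeval z (p.roots.map fun a => X - C a).prod = 0 := by
    rcases mul_eq_zero.mp h2 with h | h
    · exact absurd h hlc
    · exact h
  rw [map_multiset_prod] at h3
  have hmem := Multiset.prod_eq_zero_iff.mp h3
  rw [Multiset.map_map] at hmem
  obtain ⟨r, hr, hrw⟩ := Multiset.mem_map.mp hmem
  refine ⟨r, ?_⟩
  have h4 : aeval z (X - C r) = 0 := hrw
  rw [map_sub, aeval_X, aeval_C] at h4
  have h5 : z = algebraMap ℝ ℂ r := by linear_combination h4
  simpa using h5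

lemma ident (n : ℕ) (hn : 1 ≤ n) : ∀ i, i ≤ n-1 →
    C ((2:ℝ)^i) * hpol (gp n i) (2*n-i) = C ((4:ℝ)^n) * Qd n i := by
  intro i
  induction i with
  | zero =>
    intro _
    have hQ : Qd n 0 = C (1:ℝ) * X^n := by
      simp [Qd]
    rw [hQ, Nat.sub_zero, gp_zero, hpol_g0]
    simp
  | succ i ih =>
    intro hi
    have hIH := ih (by omega)
    have hIH' : C ((2:ℝ)^i) * derivative (hpol (gp n i) (2*n-i))
        = C ((4:ℝ)^n) * derivative (Qd n i) := by
      have h := congrArg derivative hIH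
      rwa [derivative_C_mul, derivative_C_mul] at h
    have h1 := hpol_deriv (gp n i) (2*n-(i+1))
    rw [show 2*n-(i+1)+1 = 2*n-i by omega, ← gp_succ] at h1
    rw [show (((2*n-(i+1):ℕ)):ℝ)+1 = 2*(n:ℝ)-(i:ℝ) by
      push_cast [Nat.cast_sub (show i+1 ≤ 2*n by omega)]; ring] at h1
    have h2 := Qstep n i (by omega)
    rw [pow_succ, map_mul, map_ofNat]
    linear_combination (-(C ((2:ℝ)^i))) * h1 + (1-(X:ℝ[X])) * hIH'
      + (C (2*(n:ℝ)-(i:ℝ))) * hIH + (C ((4:ℝ)^n)) * h2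

/-- For n ≥ 1, the Narayana polynomial N_n has only non-positive real zeros:
every complex zero is a non-positive real number. -/
theorem narayanaPoly_nonpos_real_roots (n : ℕ) (hn : 1 ≤ n) (z : ℂ)
    (hz : ∑ k ∈ Finset.Icc 1 n, ((n.choose k * n.choose (k - 1) : ℂ) / n) * z ^ k = 0) :
    ∃ r : ℝ, r ≤ 0 ∧ z = (r : ℂ) := by
  have hn0 : (n:ℂ) ≠ 0 := Nat.cast_ne_zero.mpr (by omega)
  have hz' : ∑ k ∈ Finset.Icc 1 n, ((n.choose k : ℂ) * (n.choose (k-1) : ℂ)) * z ^ k = 0 := by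
    calc ∑ k ∈ Finset.Icc 1 n, ((n.choose k : ℂ) * (n.choose (k-1) : ℂ)) * z ^ k
        = ∑ k ∈ Finset.Icc 1 n, (n:ℂ) * (((n.choose k * n.choose (k - 1) : ℂ) / n) * z ^ k) := by
          refine Finset.sum_congr rfl fun k _ => ?_
          field_simp [hn0]
      _ = (n:ℂ) * ∑ k ∈ Finset.Icc 1 n, ((n.choose k * n.choose (k - 1) : ℂ) / n) * z ^ k := by
          rw [Finset.mul_sum]
      _ = 0 := by rw [hz, mul_zero]
  -- z ≠ 1
  have hz1 : z ≠ 1 := by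
    intro h
    rw [h] at hz'
    simp only [one_pow, mul_one] at hz'
    have hc : ((∑ k ∈ Finset.Icc 1 n, n.choose k * n.choose (k-1) : ℕ) : ℂ) = 0 := by
      push_cast
      exact hz'
    have hsum : (∑ k ∈ Finset.Icc 1 n, n.choose k * n.choose (k-1)) = 0 := by
      exact_mod_cast hc
    have hmem : n ∈ Finset.Icc 1 n := by simp [hn]
    have hall := (Finset.sum_eq_zero_iff).mp hsum n hmem
    have hpos : 0 < n.choose n * n.choose (n-1) :=
      Nat.mul_pos (Nat.choose_pos le_rfl) (Nat.choose_pos (by omega))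
    omega
  have h1z : (1:ℂ) - z ≠ 0 := sub_ne_zero.mpr (Ne.symm hz1)
  -- Qd evaluation
  have e : n - (n-1) = 1 := by omega
  have en : n - 1 + 1 = n := by omega
  have hQeval : aeval z (Qd n (n-1)) = 0 := by
    have step1 : aeval z (Qd n (n-1))
        = ∑ j ∈ range n, ((Nat.factorial (n-1) : ℂ)) *
            (((n.choose (1+j) : ℂ) * (n.choose j : ℂ)) * z^(1+j)) := by
      rw [Qd, map_sum, en]
      refine Finset.sum_congr rfl fun j hj => ?_
      rw [e, map_mul, aeval_C, map_pow, aeval_X]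
      push_cast
      ring
    rw [step1, ← Finset.mul_sum]
    have step2 : ∑ j ∈ range n, (((n.choose (1+j) : ℂ) * (n.choose j : ℂ)) * z^(1+j)) = 0 := by
      rw [← hz', ← Finset.Ico_add_one_right_eq_Icc, Finset.sum_Ico_eq_sum_range]
      refine Finset.sum_congr (by norm_num) fun j hj => ?_
      rw [show 1+j-1 = j by omega]
    rw [step2, mul_zero]
  -- transfer to gp
  have hident := ident n hn (n-1) le_rfl
  rw [show 2*n-(n-1) = n+1 by omega] at hident
  have heq := congrArg (aeval z) hident
  rw [map_mul, map_mul, aeval_C, aeval_C, hQeval, mul_zero] at heq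
  have h2n : (algebraMap ℝ ℂ) ((2:ℝ)^(n-1)) ≠ 0 := by
    simp only [map_pow, ne_eq]
    exact pow_ne_zero _ (by norm_num)
  have hHeval : aeval z (hpol (gp n (n-1)) (n+1)) = 0 := by
    rcases mul_eq_zero.mp heq with h | h
    · exact absurd h h2n
    · exact h
  have hmapeval : (hpol ((gp n (n-1)).map (algebraMap ℝ ℂ)) (n+1)).eval z = 0 := by
    rw [← hpol_map, eval_map, ← aeval_def]
    exact hHeval
  have hspec := gp_spec n (n-1) (by omega)
  have hdeg : ((gp n (n-1)).map (algebraMap ℝ ℂ)).natDegree < (n+1)+1 := by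
    have h1 : ((gp n (n-1)).map (algebraMap ℝ ℂ)).natDegree ≤ (gp n (n-1)).natDegree :=
      natDegree_map_le
    have h2 := hspec.1
    omega
  rw [hpol_eval _ _ hdeg z hz1] at hmapeval
  have hgw : aeval ((1+z)/(1-z)) (gp n (n-1)) = 0 := by
    rcases mul_eq_zero.mp hmapeval with h | h
    · exact absurd h (pow_ne_zero _ h1z)
    · rw [aeval_def, ← eval_map]
      exact h
  have hpne : gp n (n-1) ≠ 0 := by
    intro h
    have := hspec.1
    rw [h, natDegree_zero] at this
    omega
  obtain ⟨r, hr⟩ := real_of_complexRoot _ (hspec.2.trans hspec.1.symm) hpne _ hgw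
  -- solve for z
  have hw1 : (1:ℂ) + z = (r:ℂ)*(1-z) := by
    rw [← hr]
    field_simp
  have hrne : (r:ℂ) + 1 ≠ 0 := by
    intro h
    have hr1 : (r:ℂ) = -1 := by linear_combination h
    rw [hr1] at hw1
    have : (2:ℂ) = 0 := by linear_combination hw1
    norm_num at this
  have hrne' : r + 1 ≠ 0 := by
    intro h
    apply hrne
    exact_mod_cast congrArg (fun t : ℝ => (t:ℂ)) h
  have hzr : z = ((r:ℂ)-1)/((r:ℂ)+1) := by
    rw [eq_div_iff hrne]
    linear_combination hw1
  have hzs : z = (((r-1)/(r+1) : ℝ) : ℂ) := by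
    rw [hzr]
    push_cast
    rfl
  refine ⟨(r-1)/(r+1), ?_, hzs⟩
  by_contra hs
  push_neg at hs
  set s : ℝ := (r-1)/(r+1) with hsdef
  rw [hzs] at hz'
  have hcast : ((∑ k ∈ Finset.Icc 1 n, ((n.choose k : ℝ) * (n.choose (k-1) : ℝ)) * s^k : ℝ) : ℂ) = 0 := by
    push_cast
    exact hz'
  have hreal : ∑ k ∈ Finset.Icc 1 n, ((n.choose k : ℝ) * (n.choose (k-1) : ℝ)) * s^k = 0 := by
    exact_mod_cast hcast
  have hpos : 0 < ∑ k ∈ Finset.Icc 1 n, ((n.choose k : ℝ) * (n.choose (k-1) : ℝ)) * s^k := by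
    apply Finset.sum_pos
    · intro k hk
      rw [Finset.mem_Icc] at hk
      have hc1 : 0 < (n.choose k : ℝ) := by
        exact_mod_cast Nat.choose_pos hk.2
      have hc2 : 0 < (n.choose (k-1) : ℝ) := by
        exact_mod_cast Nat.choose_pos (show k-1 ≤ n by omega)
      exact mul_pos (mul_pos hc1 hc2) (pow_pos hs k)
    · exact ⟨n, by simp [hn]⟩
  linarith
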